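/- Second moment bound: For the q-Lagrange-Hermite operator, R_{n,q}^{α⁽¹⁾,…,α⁽ʳ⁾}(s²; x) ≤ q·(x αₙ⁽¹⁾)² + x αₙ⁽¹⁾/[n]_q for all x ∈ [0,1], 0 < q < 1, αₙ⁽ᵏ⁾ ∈ (0,1). -/

import Mathlib

open Filter

/-- The q-integer `[m]_q = (1 - q^m)/(1 - q)`. -/
noncomputable def qInt (q : ℝ) (m : ℕ) : ℝ := (1 - q ^ m) / (1 - q)

/-- The q-Pochhammer symbol `(ρ;q)_m = ∏_{j=0}^{m-1} (1 - ρ qʲ)`. -/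
noncomputable def qPoch (ρ q : ℝ) (m : ℕ) : ℝ := ∏ j ∈ Finset.range m, (1 - ρ * q ^ j)

/-- The multivariate q-Lagrange-Hermite operator
`R_{n,q}^{α⁽¹⁾,…,α⁽ʳ⁾}(g;x)`, written as an absolutely rearranged sum over the
multi-indices `l = (l₁,…,l_r)` with `x^{l₁+2l₂+⋯+r·l_r}`. -/
noncomputable def LHOp (q : ℝ) (n r : ℕ) (hr : 0 < r) (α : Fin r → ℝ)
    (g : ℝ → ℝ) (x : ℝ) : ℝ :=
  (∏ i : Fin r, qPoch (α i * x ^ ((i : ℕ) + 1)) q n) *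
    ∑' l : Fin r → ℕ,
      (∏ k : Fin r, qPoch (q ^ n) q (l k) * α k ^ (l k) / qPoch q q (l k)) *
        g (qInt q (l ⟨0, hr⟩) / qInt q (n + l ⟨0, hr⟩ - 1)) *
        x ^ (∑ k : Fin r, ((k : ℕ) + 1) * l k)

section basic
variable {q : ℝ}

lemma one_sub_pow_pos (hq0 : 0 < q) (hq1 : q < 1) (m : ℕ) (hm : 1 ≤ m) : 0 < 1 - q ^ m := by
  have : q ^ m < 1 := pow_lt_one₀ hq0.le hq1 (by omega)
  linarith

lemma qInt_nonneg (hq0 : 0 < q) (hq1 : q < 1) (m : ℕ) : 0 ≤ qInt q m := by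
  have h1 : q ^ m ≤ 1 := pow_le_one₀ hq0.le hq1.le
  exact div_nonneg (by linarith) (by linarith)

lemma qInt_pos (hq0 : 0 < q) (hq1 : q < 1) (m : ℕ) (hm : 1 ≤ m) : 0 < qInt q m :=
  div_pos (one_sub_pow_pos hq0 hq1 m hm) (by linarith)

lemma qInt_mono (hq0 : 0 < q) (hq1 : q < 1) {m m' : ℕ} (h : m ≤ m') : qInt q m ≤ qInt q m' := by
  have := pow_le_pow_of_le_one hq0.le hq1.le h
  apply div_le_div_of_nonneg_right (by linarith) (by linarith)

lemma qInt_succ (hq1 : q < 1) (m : ℕ) : qInt q (m + 1) = 1 + q * qInt q m := by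
  have h : (1 : ℝ) - q ≠ 0 := ne_of_gt (by linarith)
  unfold qInt
  field_simp
  ring

lemma qPoch_succ (ρ : ℝ) (m : ℕ) : qPoch ρ q (m + 1) = qPoch ρ q m * (1 - ρ * q ^ m) :=
  Finset.prod_range_succ _ _

lemma qPoch_succ' (ρ : ℝ) (m : ℕ) : qPoch ρ q (m + 1) = (1 - ρ) * qPoch (ρ * q) q m := by
  unfold qPoch
  rw [Finset.prod_range_succ']
  simp only [pow_zero, mul_one]
  rw [mul_comm]
  congr 1
  exact Finset.prod_congr rfl fun j _ => by ring_nf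

lemma qPoch_pos (hq0 : 0 < q) (hq1 : q < 1) {ρ : ℝ} (h0 : 0 ≤ ρ) (h1 : ρ < 1) (m : ℕ) :
    0 < qPoch ρ q m := by
  apply Finset.prod_pos
  intro j _
  have hj : q ^ j ≤ 1 := pow_le_one₀ hq0.le hq1.le
  have hj0 : 0 ≤ q ^ j := by positivity
  nlinarith

end basic

noncomputable def cf (q : ℝ) (n m : ℕ) : ℝ := qPoch (q ^ n) q m / qPoch q q m

section cfsec
variable {q : ℝ} (hq0 : 0 < q) (hq1 : q < 1)

lemma qpow_lt_one (hq0 : 0 < q) (hq1 : q < 1) {k : ℕ} (hk : 1 ≤ k) : q ^ k < 1 :=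
  pow_lt_one₀ hq0.le hq1 (by omega)

lemma qPoch_q_pos (hq0 : 0 < q) (hq1 : q < 1) (m : ℕ) : 0 < qPoch q q m :=
  qPoch_pos hq0 hq1 hq0.le hq1 m

lemma cf_nonneg (hq0 : 0 < q) (hq1 : q < 1) (n m : ℕ) : 0 ≤ cf q n m := by
  have h1 : q ^ n ≤ 1 := pow_le_one₀ hq0.le hq1.le
  have h2 : 0 ≤ qPoch (q ^ n) q m := by
    apply Finset.prod_nonneg
    intro j _
    have hj : q ^ j ≤ 1 := pow_le_one₀ hq0.le hq1.le
    have hj0 : 0 ≤ q ^ j := by positivity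
    have hn0 : 0 ≤ q ^ n := by positivity
    nlinarith
  exact div_nonneg h2 (qPoch_q_pos hq0 hq1 m).le

lemma cf_succ (hq0 : 0 < q) (hq1 : q < 1) (n m : ℕ) :
    cf q n (m + 1) = cf q n m * ((1 - q ^ (n + m)) / (1 - q ^ (m + 1))) := by
  have h1 : qPoch q q (m + 1) = qPoch q q m * (1 - q ^ (m + 1)) := by
    rw [qPoch_succ]; rw [← pow_succ']
  have h2 : qPoch (q ^ n) q (m + 1) = qPoch (q ^ n) q m * (1 - q ^ (n + m)) := by
    rw [qPoch_succ]; rw [← pow_add]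
  have h3 : (1 : ℝ) - q ^ (m + 1) ≠ 0 := ne_of_gt (one_sub_pow_pos hq0 hq1 _ (by omega))
  have h4 : qPoch q q m ≠ 0 := ne_of_gt (qPoch_q_pos hq0 hq1 m)
  unfold cf
  rw [h1, h2]
  field_simp

lemma cf_zero (q : ℝ) (n : ℕ) : cf q n 0 = 1 := by simp [cf, qPoch]

/-- recurrence in n -/
lemma cf_rec (hq0 : 0 < q) (hq1 : q < 1) (n m : ℕ) :
    cf q (n + 1) (m + 1) = cf q n (m + 1) + q ^ n * cf q (n + 1) m := by
  have h3 : (1 : ℝ) - q ^ (m + 1) ≠ 0 := ne_of_gt (one_sub_pow_pos hq0 hq1 _ (by omega))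
  have h4 : qPoch q q m ≠ 0 := ne_of_gt (qPoch_q_pos hq0 hq1 m)
  have h1 : qPoch q q (m + 1) = qPoch q q m * (1 - q ^ (m + 1)) := by
    rw [qPoch_succ]; rw [← pow_succ']
  have h2 : qPoch (q ^ (n + 1)) q (m + 1)
      = qPoch (q ^ (n + 1)) q m * (1 - q ^ (n + 1 + m)) := by
    rw [qPoch_succ]; rw [← pow_add]
  have h5 : qPoch (q ^ n) q (m + 1) = (1 - q ^ n) * qPoch (q ^ (n + 1)) q m := by
    rw [qPoch_succ']; rw [← pow_succ]
  unfold cf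
  rw [h1, h2, h5]
  have hpow : q ^ (n + 1 + m) = q ^ n * q ^ (m + 1) := by rw [← pow_add]; ring_nf
  field_simp
  ring_nf

end cfsec

section sumsec
variable {q t : ℝ}

lemma cf_summable (hq0 : 0 < q) (hq1 : q < 1) (n : ℕ) (ht0 : 0 ≤ t) (ht1 : t < 1) :
    Summable (fun m => cf q n m * t ^ m) := by
  apply summable_of_ratio_norm_eventually_le (r := (1 + t) / 2) (by linarith)
  have hlim : Tendsto (fun m : ℕ => q ^ (m + 1)) atTop (nhds 0) := by
    have := tendsto_pow_atTop_nhds_zero_of_lt_one hq0.le hq1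
    exact this.comp (tendsto_add_atTop_nat 1)
  have hev : ∀ᶠ m in atTop, q ^ (m + 1) < (1 - t) / (1 + t) := by
    apply hlim.eventually (gt_mem_nhds (div_pos (by linarith) (by linarith)))
  filter_upwards [hev] with m hm
  have hc0 : 0 ≤ cf q n m := cf_nonneg hq0 hq1 n m
  have ht0m : (0:ℝ) ≤ t ^ m := by positivity
  have h1 : (0:ℝ) < 1 - q ^ (m + 1) := one_sub_pow_pos hq0 hq1 _ (by omega)
  have h2 : q ^ (n + m) ≥ 0 := by positivity
  have hfs : cf q n (m + 1) * t ^ (m + 1)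
      = cf q n m * t ^ m * (t * ((1 - q ^ (n + m)) / (1 - q ^ (m + 1)))) := by
    rw [cf_succ hq0 hq1, pow_succ]; ring
  have hb : q ^ (m + 1) * (1 + t) < 1 - t := (lt_div_iff₀ (by linarith)).mp hm
  have key2 : t * (1 - q ^ (n + m)) * 2 ≤ (1 + t) * (1 - q ^ (m + 1)) := by
    nlinarith [mul_nonneg ht0 h2]
  have hle : t * ((1 - q ^ (n + m)) / (1 - q ^ (m + 1))) ≤ (1 + t) / 2 := by
    rw [← mul_div_assoc, div_le_div_iff₀ h1 (by norm_num : (0:ℝ) < 2)]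
    linarith
  rw [Real.norm_of_nonneg (mul_nonneg (cf_nonneg hq0 hq1 n _) (by positivity)),
    Real.norm_of_nonneg (mul_nonneg hc0 ht0m)]
  rw [hfs]
  calc cf q n m * t ^ m * (t * ((1 - q ^ (n + m)) / (1 - q ^ (m + 1))))
      ≤ cf q n m * t ^ m * ((1 + t) / 2) := by
        apply mul_le_mul_of_nonneg_left hle (by positivity)
    _ = (1 + t) / 2 * (cf q n m * t ^ m) := by ring

set_option maxHeartbeats 1000000 in
lemma cf_tsum (hq0 : 0 < q) (hq1 : q < 1) (ht0 : 0 ≤ t) (ht1 : t < 1) (n : ℕ) :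
    qPoch t q n * ∑' m, cf q n m * t ^ m = 1 := by
  induction n with
  | zero =>
    have h : ∑' m, cf q 0 m * t ^ m = 1 := by
      rw [tsum_eq_single 0]
      · simp [cf_zero]
      · intro m hm
        have h0 : qPoch 1 q m = 0 := by
          unfold qPoch
          apply Finset.prod_eq_zero (i := 0) (Finset.mem_range.mpr (Nat.pos_of_ne_zero hm))
          simp
        simp [cf, h0]
    rw [h]; simp [qPoch]
  | succ n ih =>
    have hS : Summable (fun m => cf q (n + 1) m * t ^ m) := cf_summable hq0 hq1 _ ht0 ht1
    have hSn : Summable (fun m => cf q n m * t ^ m) := cf_summable hq0 hq1 _ ht0 ht1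
    have hSn' : Summable (fun m => cf q n (m + 1) * t ^ (m + 1)) :=
      (summable_nat_add_iff 1).mpr hSn
    have hptwise : ∀ m, cf q (n + 1) (m + 1) * t ^ (m + 1)
        = cf q n (m + 1) * t ^ (m + 1) + q ^ n * t * (cf q (n + 1) m * t ^ m) := by
      intro m
      rw [cf_rec hq0 hq1, pow_succ]; ring
    have hA : (∑' m, cf q (n + 1) (m + 1) * t ^ (m + 1))
        = (∑' m, cf q n (m + 1) * t ^ (m + 1)) + q ^ n * t * ∑' m, cf q (n + 1) m * t ^ m := by
      rw [tsum_congr hptwise, Summable.tsum_add hSn' (hS.mul_left _), tsum_mul_left]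
    have hB : (∑' m, cf q n (m + 1) * t ^ (m + 1)) = (∑' m, cf q n m * t ^ m) - 1 := by
      have h := Summable.tsum_eq_zero_add hSn
      simp only [cf_zero, pow_zero, one_mul] at h
      linarith
    have h0 : (∑' m, cf q (n + 1) m * t ^ m)
        = 1 + (((∑' m, cf q n m * t ^ m) - 1) + q ^ n * t * ∑' m, cf q (n + 1) m * t ^ m) := by
      conv_lhs => rw [Summable.tsum_eq_zero_add hS, hA, hB, cf_zero]
      ring
    have hq' : (1 - t * q ^ n) * (∑' m, cf q (n + 1) m * t ^ m) = ∑' m, cf q n m * t ^ m := by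
      nlinarith [h0]
    rw [qPoch_succ, mul_assoc, hq', ih]

end sumsec

noncomputable def sr (q : ℝ) (n m : ℕ) : ℝ := qInt q m / qInt q (n + m - 1)

section srsec
variable {q t : ℝ}

lemma sr_zero (q : ℝ) (n : ℕ) : sr q n 0 = 0 := by simp [sr, qInt]

lemma sr_nonneg (hq0 : 0 < q) (hq1 : q < 1) (n m : ℕ) : 0 ≤ sr q n m :=
  div_nonneg (qInt_nonneg hq0 hq1 m) (qInt_nonneg hq0 hq1 _)

lemma sr_le_one (hq0 : 0 < q) (hq1 : q < 1) {n : ℕ} (hn : 1 ≤ n) (m : ℕ) : sr q n m ≤ 1 := by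
  rcases Nat.eq_zero_or_pos m with h | h
  · rw [h, sr_zero]; norm_num
  · rw [sr, div_le_one (qInt_pos hq0 hq1 _ (by omega))]
    exact qInt_mono hq0 hq1 (by omega)

/-- key shift: `cf (m+1) * sr (m+1) = cf m` for `n ≥ 1`. -/
lemma cf_sr_shift (hq0 : 0 < q) (hq1 : q < 1) {n : ℕ} (hn : 1 ≤ n) (m : ℕ) :
    cf q n (m + 1) * sr q n (m + 1) = cf q n m := by
  have hidx : n + (m + 1) - 1 = n + m := by omega
  have h1 : (1 : ℝ) - q ^ (m + 1) ≠ 0 := ne_of_gt (one_sub_pow_pos hq0 hq1 _ (by omega))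
  have h2 : (1 : ℝ) - q ^ (n + m) ≠ 0 := ne_of_gt (one_sub_pow_pos hq0 hq1 _ (by omega))
  have h3 : (1 : ℝ) - q ≠ 0 := ne_of_gt (by linarith)
  rw [cf_succ hq0 hq1, sr, hidx]
  unfold qInt
  field_simp

/-- the first-moment type sum. -/
lemma tsum_sr (hq0 : 0 < q) (hq1 : q < 1) (ht0 : 0 ≤ t) (ht1 : t < 1) {n : ℕ} (hn : 1 ≤ n) :
    Summable (fun m => cf q n m * sr q n m * t ^ m) ∧
      (∑' m, cf q n m * sr q n m * t ^ m) = t * ∑' m, cf q n m * t ^ m := by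
  have hS : Summable (fun m => cf q n m * t ^ m) := cf_summable hq0 hq1 n ht0 ht1
  have hsum : Summable (fun m => cf q n m * sr q n m * t ^ m) := by
    apply hS.of_nonneg_of_le
    · intro m
      exact mul_nonneg (mul_nonneg (cf_nonneg hq0 hq1 n m) (sr_nonneg hq0 hq1 n m))
        (by positivity)
    · intro m
      have hle := sr_le_one hq0 hq1 hn m
      have h1 := cf_nonneg hq0 hq1 n m
      have h2 : (0:ℝ) ≤ t ^ m := by positivity
      have : cf q n m * sr q n m * t ^ m ≤ cf q n m * 1 * t ^ m := by
        gcongr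
      simpa using this
  refine ⟨hsum, ?_⟩
  rw [Summable.tsum_eq_zero_add hsum]
  have hz : cf q n 0 * sr q n 0 * t ^ 0 = 0 := by rw [sr_zero]; ring
  have hsh : ∀ m : ℕ, cf q n (m + 1) * sr q n (m + 1) * t ^ (m + 1)
      = t * (cf q n m * t ^ m) := by
    intro m
    rw [show cf q n (m + 1) * sr q n (m + 1) * t ^ (m + 1)
        = (cf q n (m + 1) * sr q n (m + 1)) * t ^ (m + 1) by ring,
      cf_sr_shift hq0 hq1 hn, pow_succ]
    ring
  rw [hz, tsum_congr hsh, tsum_mul_left]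
  ring

set_option maxHeartbeats 1000000 in
/-- double shift: `cf (m+2) * sr (m+2) * sr (m+1) = cf m`. -/
lemma cf_sr2_shift (hq0 : 0 < q) (hq1 : q < 1) {n : ℕ} (hn : 1 ≤ n) (m : ℕ) :
    cf q n (m + 2) * (sr q n (m + 2) * sr q n (m + 2 - 1)) = cf q n m := by
  have h : m + 2 - 1 = m + 1 := by omega
  rw [h, show m + 2 = (m + 1) + 1 from rfl, cf_succ hq0 hq1 n (m+1),
    show (m + 1) + 1 = m + 2 from rfl]
  have e1 := cf_sr_shift hq0 hq1 hn m      -- cf (m+1) * sr (m+1) = cf m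
  have hidx : n + (m + 2) - 1 = n + (m + 1) := by omega
  have h1 : (1 : ℝ) - q ^ (m + 2) ≠ 0 := ne_of_gt (one_sub_pow_pos hq0 hq1 _ (by omega))
  have h2 : (1 : ℝ) - q ^ (n + (m + 1)) ≠ 0 := ne_of_gt (one_sub_pow_pos hq0 hq1 _ (by omega))
  have h3 : (1 : ℝ) - q ≠ 0 := ne_of_gt (by linarith)
  have e2 : (1 - q ^ (n + (m + 1))) / (1 - q ^ (m + 1 + 1)) * sr q n (m + 2) = 1 := by
    rw [sr, hidx]
    unfold qInt
    field_simp
  calc cf q n (m + 1) * ((1 - q ^ (n + (m + 1))) / (1 - q ^ (m + 1 + 1)))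
        * (sr q n (m + 2) * sr q n (m + 1))
      = (cf q n (m + 1) * sr q n (m + 1)) *
          ((1 - q ^ (n + (m + 1))) / (1 - q ^ (m + 1 + 1)) * sr q n (m + 2)) := by ring
    _ = cf q n m := by rw [e1, e2, mul_one]

set_option maxHeartbeats 1000000 in
/-- the second-moment type sum. -/
lemma tsum_sr2 (hq0 : 0 < q) (hq1 : q < 1) (ht0 : 0 ≤ t) (ht1 : t < 1) {n : ℕ} (hn : 1 ≤ n) :
    Summable (fun m => cf q n m * (sr q n m * sr q n (m - 1)) * t ^ m) ∧
      (∑' m, cf q n m * (sr q n m * sr q n (m - 1)) * t ^ m)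
        = t ^ 2 * ∑' m, cf q n m * t ^ m := by
  have hS : Summable (fun m => cf q n m * t ^ m) := cf_summable hq0 hq1 n ht0 ht1
  have hsum : Summable (fun m => cf q n m * (sr q n m * sr q n (m - 1)) * t ^ m) := by
    apply hS.of_nonneg_of_le
    · intro m
      have := sr_nonneg hq0 hq1 n m
      have := sr_nonneg hq0 hq1 n (m - 1)
      have := cf_nonneg hq0 hq1 n m
      positivity
    · intro m
      have u1 := sr_le_one hq0 hq1 hn m
      have u2 := sr_le_one hq0 hq1 hn (m - 1)
      have v1 := sr_nonneg hq0 hq1 n m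
      have v2 := sr_nonneg hq0 hq1 n (m - 1)
      have h1 := cf_nonneg hq0 hq1 n m
      have h2 : (0:ℝ) ≤ t ^ m := by positivity
      have hu : sr q n m * sr q n (m - 1) ≤ 1 := by nlinarith
      have : cf q n m * (sr q n m * sr q n (m - 1)) * t ^ m ≤ cf q n m * 1 * t ^ m := by
        gcongr
      simpa using this
  refine ⟨hsum, ?_⟩
  have hsum1 : Summable (fun m =>
      cf q n (m + 1) * (sr q n (m + 1) * sr q n (m + 1 - 1)) * t ^ (m + 1)) :=
    (summable_nat_add_iff 1).mpr hsum
  rw [Summable.tsum_eq_zero_add hsum, Summable.tsum_eq_zero_add hsum1]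
  have hz : cf q n 0 * (sr q n 0 * sr q n (0 - 1)) * t ^ 0 = 0 := by rw [sr_zero]; ring
  have hz1 : cf q n (0 + 1) * (sr q n (0 + 1) * sr q n (0 + 1 - 1)) * t ^ (0 + 1) = 0 := by
    norm_num [sr_zero]
  have hsh : ∀ m : ℕ, cf q n (m + 1 + 1) * (sr q n (m + 1 + 1) * sr q n (m + 1 + 1 - 1))
      * t ^ (m + 1 + 1) = t ^ 2 * (cf q n m * t ^ m) := by
    intro m
    have := cf_sr2_shift hq0 hq1 hn m
    rw [show m + 1 + 1 = m + 2 from rfl, show cf q n (m + 2)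
        * (sr q n (m + 2) * sr q n (m + 2 - 1)) * t ^ (m + 2)
        = (cf q n (m + 2) * (sr q n (m + 2) * sr q n (m + 2 - 1))) * t ^ (m + 2) by ring,
      this]
    ring
  rw [hz, hz1, tsum_congr hsh, tsum_mul_left]
  ring

end srsec

/-- key pointwise bound: `sr m ^ 2 ≤ sr m / [n] + q * sr m * sr (m-1)`. -/
lemma sr_sq_le {q : ℝ} (hq0 : 0 < q) (hq1 : q < 1) {n : ℕ} (hn : 1 ≤ n) (m : ℕ) :
    sr q n m ^ 2 ≤ sr q n m / qInt q n + q * (sr q n m * sr q n (m - 1)) := by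
  rcases Nat.eq_zero_or_pos m with h | hm
  · rw [h, sr_zero]
    simp
  obtain ⟨m, rfl⟩ := Nat.exists_eq_add_of_le hm
  rw [Nat.add_comm 1 m]
  set A := qInt q (m + 1) with hA
  set B := qInt q (n + (m + 1) - 1) with hB
  have hidx : n + (m + 1) - 1 = n + m := by omega
  have hBpos : 0 < B := by rw [hB, hidx]; exact qInt_pos hq0 hq1 _ (by omega)
  have hApos : 0 < A := qInt_pos hq0 hq1 _ (by omega)
  have hnB : qInt q n ≤ B := by rw [hB, hidx]; exact qInt_mono hq0 hq1 (by omega)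
  have hnpos : 0 < qInt q n := qInt_pos hq0 hq1 n hn
  have hAsucc : A = 1 + q * qInt q m := by rw [hA, qInt_succ hq1]
  have hsplit : sr q n (m + 1) ^ 2 = A / B ^ 2 + q * (A * qInt q m) / B ^ 2 := by
    rw [sr, ← hA, ← hB, div_pow, hAsucc]
    field_simp
  rw [hsplit]
  have hterm1 : A / B ^ 2 ≤ sr q n (m + 1) / qInt q n := by
    rw [sr, ← hA, ← hB, div_div, pow_two]
    apply div_le_div_of_nonneg_left hApos.le (by positivity)
    exact mul_le_mul_of_nonneg_left hnB hBpos.le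
  have hterm2 : q * (A * qInt q m) / B ^ 2 ≤ q * (sr q n (m + 1) * sr q n (m + 1 - 1)) := by
    have h1 : m + 1 - 1 = m := by omega
    rw [h1, sr, sr, ← hA, ← hB]
    rcases Nat.eq_zero_or_pos m with h | hm1
    · subst h
      simp [qInt]
    · have hB'pos : 0 < qInt q (n + m - 1) := qInt_pos hq0 hq1 _ (by omega)
      have hB'le : qInt q (n + m - 1) ≤ B := by
        rw [hB, hidx]; exact qInt_mono hq0 hq1 (by omega)
      have hqm : 0 ≤ qInt q m := qInt_nonneg hq0 hq1 m
      rw [div_mul_div_comm, mul_div_assoc]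
      apply mul_le_mul_of_nonneg_left _ hq0.le
      rw [pow_two]
      apply div_le_div_of_nonneg_left (by positivity) (by positivity)
      exact mul_le_mul_of_nonneg_left hB'le hBpos.le
  linarith

set_option maxHeartbeats 1000000 in
/-- product-of-tsums over `Fin r → ℕ`. -/
lemma pi_summable_tsum : ∀ (r : ℕ) (f : Fin r → ℕ → ℝ), (∀ k m, 0 ≤ f k m) →
    (∀ k, Summable (f k)) →
    Summable (fun l : Fin r → ℕ => ∏ k, f k (l k)) ∧
      (∑' l : Fin r → ℕ, ∏ k, f k (l k)) = ∏ k, ∑' m, f k m := by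
  intro r
  induction r with
  | zero =>
    intro f _ _
    constructor
    · exact summable_of_finite_support (Set.toFinite _)
    · rw [tsum_eq_single (fun i => i.elim0) (by intro l hl; exact absurd (funext fun i => i.elim0) hl)]
      simp
  | succ r ih =>
    intro f h0 hs
    obtain ⟨ihr1, ihr2⟩ := ih (fun k => f k.succ) (fun k m => h0 k.succ m) (fun k => hs k.succ)
    have ihr1 : Summable (fun l : Fin r → ℕ => ∏ k : Fin r, f k.succ (l k)) := ihr1
    have ihr2 : (∑' l : Fin r → ℕ, ∏ k : Fin r, f k.succ (l k))
        = ∏ k : Fin r, ∑' m, f k.succ m := ihr2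
    set e := (Fin.consEquiv (fun _ : Fin (r+1) => ℕ)).symm with he
    have hg : Summable (fun p : ℕ × (Fin r → ℕ) => f 0 p.1 * ∏ k : Fin r, f k.succ (p.2 k)) := by
      apply Summable.mul_of_nonneg (hs 0) ihr1
      · intro m; exact h0 0 m
      · intro l; exact Finset.prod_nonneg fun k _ => h0 k.succ (l k)
    have hcomp : (fun l : Fin (r+1) → ℕ => ∏ k, f k (l k))
        = (fun p : ℕ × (Fin r → ℕ) => f 0 p.1 * ∏ k : Fin r, f k.succ (p.2 k)) ∘ e := by
      funext l
      simp only [Function.comp_apply, he, Fin.consEquiv_symm_apply]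
      exact Fin.prod_univ_succ _
    constructor
    · rw [hcomp]
      exact (e.summable_iff).mpr hg
    · have hfib : ∀ b : ℕ, Summable
          (fun c : Fin r → ℕ => f 0 b * ∏ k : Fin r, f k.succ (c k)) :=
        fun b => ihr1.mul_left _
      rw [hcomp, Function.comp_def]
      rw [e.tsum_eq (fun p : ℕ × (Fin r → ℕ) => f 0 p.1 * ∏ k : Fin r, f k.succ (p.2 k))]
      rw [Summable.tsum_prod' hg hfib]
      simp_rw [tsum_mul_left]
      rw [tsum_mul_right, ihr2, Fin.prod_univ_succ]

set_option maxHeartbeats 1000000 in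
/-- summing a weighted product family over `Fin r → ℕ`. -/
lemma family_tsum {q : ℝ} (hq0 : 0 < q) (hq1 : q < 1) (n : ℕ) {r : ℕ} (hr : 0 < r)
    (t : Fin r → ℝ) (ht0 : ∀ k, 0 ≤ t k) (ht1 : ∀ k, t k < 1)
    (w : ℕ → ℝ) (hw0 : ∀ m, 0 ≤ w m) (hw1 : ∀ m, w m ≤ 1) :
    Summable (fun l : Fin r → ℕ =>
        (∏ k : Fin r, cf q n (l k) * t k ^ (l k)) * w (l ⟨0, hr⟩)) ∧
      (∑' l : Fin r → ℕ, (∏ k : Fin r, cf q n (l k) * t k ^ (l k)) * w (l ⟨0, hr⟩))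
        = (∑' m, cf q n m * w m * t ⟨0, hr⟩ ^ m) *
            ∏ k ∈ Finset.univ.erase ⟨0, hr⟩, ∑' m, cf q n m * t k ^ m := by
  set i0 : Fin r := ⟨0, hr⟩ with hi0
  set f : Fin r → ℕ → ℝ :=
    fun k m => cf q n m * t k ^ m * (if k = i0 then w m else 1) with hf
  have hbase0 : ∀ k m, (0:ℝ) ≤ cf q n m * t k ^ m := by
    intro k m
    exact mul_nonneg (cf_nonneg hq0 hq1 n m) (pow_nonneg (ht0 k) m)
  have h0 : ∀ k m, 0 ≤ f k m := by
    intro k m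
    apply mul_nonneg (hbase0 k m)
    by_cases h : k = i0 <;> simp [h, hw0 m]
  have hbaseS : ∀ k, Summable (fun m => cf q n m * t k ^ m) :=
    fun k => cf_summable hq0 hq1 n (ht0 k) (ht1 k)
  have hs : ∀ k, Summable (f k) := by
    intro k
    apply (hbaseS k).of_nonneg_of_le (h0 k)
    intro m
    rw [hf]
    by_cases h : k = i0
    · subst h
      simp only [eq_self_iff_true, if_true]
      nlinarith [hbase0 i0 m, hw0 m, hw1 m]
    · simp [h]
  obtain ⟨hsum, htsum⟩ := pi_summable_tsum r f h0 hs
  have hprod : ∀ l : Fin r → ℕ,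
      (∏ k : Fin r, f k (l k)) = (∏ k : Fin r, cf q n (l k) * t k ^ (l k)) * w (l i0) := by
    intro l
    rw [hf]
    simp only []
    rw [Finset.prod_mul_distrib]
    congr 1
    exact Fintype.prod_ite_eq' i0 (fun k => w (l k))
  constructor
  · exact hsum.congr (fun l => by rw [← hprod l])
  · rw [← tsum_congr hprod, htsum]
    rw [← Finset.mul_prod_erase Finset.univ _ (Finset.mem_univ i0)]
    congr 1
    · rw [hf]
      exact tsum_congr fun m => by
        simp only [eq_self_iff_true, if_true]
        ring
    · apply Finset.prod_congr rfl
      intro k hk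
      have hk' : k ≠ i0 := (Finset.mem_erase.mp hk).1
      rw [hf]
      simp [hk']


set_option maxHeartbeats 2000000 in
/-- Second moment bound: `R_{n,q}(s²;x) ≤ q (x α⁽¹⁾)² + x α⁽¹⁾/[n]_q`. -/
theorem stmt14 (q : ℝ) (hq : 0 < q) (hq1 : q < 1) (r : ℕ) (hr : 0 < r)
    (α : Fin r → ℝ) (hα : ∀ i, α i ∈ Set.Ioo (0 : ℝ) 1) (x : ℝ)
    (hx : x ∈ Set.Icc (0 : ℝ) 1) (n : ℕ) (hn : 1 ≤ n) :
    LHOp q n r hr α (fun s => s ^ 2) x ≤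
      q * (x * α ⟨0, hr⟩) ^ 2 + x * α ⟨0, hr⟩ / qInt q n := by
  obtain ⟨hx0, hx1⟩ := hx
  have hqn : 0 < qInt q n := qInt_pos hq hq1 n hn
  set t : Fin r → ℝ := fun k => α k * x ^ ((k : ℕ) + 1) with htdef
  have ht0 : ∀ k, 0 ≤ t k := fun k => mul_nonneg (hα k).1.le (pow_nonneg hx0 _)
  have ht1 : ∀ k, t k < 1 := by
    intro k
    have hxp : x ^ ((k : ℕ) + 1) ≤ 1 := pow_le_one₀ hx0 hx1
    have h1 := (hα k).1
    have h2 := (hα k).2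
    calc t k = α k * x ^ ((k : ℕ) + 1) := rfl
      _ ≤ α k * 1 := mul_le_mul_of_nonneg_left hxp h1.le
      _ < 1 := by linarith
  have hsr0 := fun m => sr_nonneg hq hq1 n m
  have hsr1 := fun m => sr_le_one hq hq1 hn m
  obtain ⟨hS2, hT2⟩ := family_tsum hq hq1 n hr t ht0 ht1 (fun m => sr q n m ^ 2)
    (fun m => sq_nonneg _)
    (fun m => by show sr q n m ^ 2 ≤ 1; nlinarith [hsr0 m, hsr1 m])
  obtain ⟨hS1, hT1⟩ := family_tsum hq hq1 n hr t ht0 ht1 (fun m => sr q n m)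
    hsr0 hsr1
  obtain ⟨hSu, hTu⟩ := family_tsum hq hq1 n hr t ht0 ht1
    (fun m => sr q n m * sr q n (m - 1))
    (fun m => mul_nonneg (hsr0 m) (hsr0 (m - 1)))
    (fun m => by
      show sr q n m * sr q n (m - 1) ≤ 1
      nlinarith [hsr0 m, hsr1 m, hsr0 (m - 1), hsr1 (m - 1)])
  -- evaluate the weighted 1-dim sums
  have e1 : (∑' m, cf q n m * sr q n m * t ⟨0, hr⟩ ^ m)
      = t ⟨0, hr⟩ * ∑' m, cf q n m * t ⟨0, hr⟩ ^ m :=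
    (tsum_sr hq hq1 (ht0 ⟨0, hr⟩) (ht1 ⟨0, hr⟩) hn).2
  have eu : (∑' m, cf q n m * (sr q n m * sr q n (m - 1)) * t ⟨0, hr⟩ ^ m)
      = t ⟨0, hr⟩ ^ 2 * ∑' m, cf q n m * t ⟨0, hr⟩ ^ m :=
    (tsum_sr2 hq hq1 (ht0 ⟨0, hr⟩) (ht1 ⟨0, hr⟩) hn).2
  rw [e1] at hT1
  rw [eu] at hTu
  -- pointwise bound
  have hbase0 : ∀ l : Fin r → ℕ, 0 ≤ ∏ k : Fin r, cf q n (l k) * t k ^ (l k) := fun l =>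
    Finset.prod_nonneg fun k _ => mul_nonneg (cf_nonneg hq hq1 n _) (pow_nonneg (ht0 k) _)
  have hptw : ∀ l : Fin r → ℕ,
      (∏ k : Fin r, cf q n (l k) * t k ^ (l k)) * sr q n (l ⟨0, hr⟩) ^ 2
        ≤ (1 / qInt q n) *
            ((∏ k : Fin r, cf q n (l k) * t k ^ (l k)) * sr q n (l ⟨0, hr⟩))
          + q * ((∏ k : Fin r, cf q n (l k) * t k ^ (l k)) *
              (sr q n (l ⟨0, hr⟩) * sr q n (l ⟨0, hr⟩ - 1))) := by
    intro l
    have hkey := sr_sq_le hq hq1 hn (l ⟨0, hr⟩)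
    have hb := hbase0 l
    calc (∏ k : Fin r, cf q n (l k) * t k ^ (l k)) * sr q n (l ⟨0, hr⟩) ^ 2
        ≤ (∏ k : Fin r, cf q n (l k) * t k ^ (l k))
            * (sr q n (l ⟨0, hr⟩) / qInt q n
               + q * (sr q n (l ⟨0, hr⟩) * sr q n (l ⟨0, hr⟩ - 1))) :=
          mul_le_mul_of_nonneg_left hkey hb
      _ = _ := by field_simp
  -- compare tsums
  have hcombS : Summable (fun l : Fin r → ℕ =>
      (1 / qInt q n) *
          ((∏ k : Fin r, cf q n (l k) * t k ^ (l k)) * sr q n (l ⟨0, hr⟩))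
        + q * ((∏ k : Fin r, cf q n (l k) * t k ^ (l k)) *
            (sr q n (l ⟨0, hr⟩) * sr q n (l ⟨0, hr⟩ - 1)))) :=
    (hS1.mul_left _).add (hSu.mul_left _)
  have hle := Summable.tsum_le_tsum hptw hS2 hcombS
  rw [Summable.tsum_add (hS1.mul_left _) (hSu.mul_left _), tsum_mul_left, tsum_mul_left] at hle
  rw [hT1, hTu] at hle
  -- identify LHOp with the F2 tsum
  have hLH : LHOp q n r hr α (fun s => s ^ 2) x
      = (∏ i : Fin r, qPoch (t i) q n) *
          ∑' l : Fin r → ℕ,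
            (∏ k : Fin r, cf q n (l k) * t k ^ (l k)) * sr q n (l ⟨0, hr⟩) ^ 2 := by
    unfold LHOp
    congr 1
    apply tsum_congr
    intro l
    have hprodeq : (∏ k : Fin r, cf q n (l k) * t k ^ (l k))
        = ∏ k : Fin r, (qPoch (q ^ n) q (l k) * α k ^ (l k) / qPoch q q (l k))
            * x ^ (((k : ℕ) + 1) * (l k)) := by
      apply Finset.prod_congr rfl
      intro k _
      rw [htdef]
      simp only []
      rw [mul_pow, pow_mul]
      unfold cf
      ring
    rw [hprodeq, Finset.prod_mul_distrib, ← Finset.prod_pow_eq_pow_sum]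
    simp only [sr]
    ring
  -- positivity of the prefactor and the normalization identity
  have hQpos : (0:ℝ) < ∏ i : Fin r, qPoch (t i) q n :=
    Finset.prod_pos fun k _ => qPoch_pos hq hq1 (ht0 k) (ht1 k) n
  have hone : (∏ i : Fin r, qPoch (t i) q n) * ∏ k : Fin r, (∑' m, cf q n m * t k ^ m)
      = 1 := by
    rw [← Finset.prod_mul_distrib]
    exact Finset.prod_eq_one fun k _ => cf_tsum hq hq1 (ht0 k) (ht1 k) n
  have hfull : (∑' m, cf q n m * t ⟨0, hr⟩ ^ m) *
      ∏ k ∈ Finset.univ.erase ⟨0, hr⟩, (∑' m, cf q n m * t k ^ m)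
      = ∏ k : Fin r, (∑' m, cf q n m * t k ^ m) :=
    Finset.mul_prod_erase Finset.univ (fun k : Fin r => ∑' m, cf q n m * t k ^ m)
      (Finset.mem_univ (⟨0, hr⟩ : Fin r))
  have ht0x : t ⟨0, hr⟩ = x * α ⟨0, hr⟩ := by
    rw [htdef]
    simp only []
    norm_num
    ring
  -- put everything together
  rw [hLH]
  calc (∏ i : Fin r, qPoch (t i) q n) *
        ∑' l : Fin r → ℕ,
          (∏ k : Fin r, cf q n (l k) * t k ^ (l k)) * sr q n (l ⟨0, hr⟩) ^ 2
      ≤ (∏ i : Fin r, qPoch (t i) q n) *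
          ((1 / qInt q n) * (t ⟨0, hr⟩ * (∑' m, cf q n m * t ⟨0, hr⟩ ^ m) *
              ∏ k ∈ Finset.univ.erase ⟨0, hr⟩, (∑' m, cf q n m * t k ^ m))
            + q * (t ⟨0, hr⟩ ^ 2 * (∑' m, cf q n m * t ⟨0, hr⟩ ^ m) *
              ∏ k ∈ Finset.univ.erase ⟨0, hr⟩, (∑' m, cf q n m * t k ^ m))) :=
        mul_le_mul_of_nonneg_left hle hQpos.le
    _ = ((1 / qInt q n) * t ⟨0, hr⟩ + q * t ⟨0, hr⟩ ^ 2) *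
          ((∏ i : Fin r, qPoch (t i) q n) *
            ((∑' m, cf q n m * t ⟨0, hr⟩ ^ m) *
              ∏ k ∈ Finset.univ.erase ⟨0, hr⟩, (∑' m, cf q n m * t k ^ m))) := by ring
    _ = (1 / qInt q n) * t ⟨0, hr⟩ + q * t ⟨0, hr⟩ ^ 2 := by
        rw [hfull, hone, mul_one]
    _ = q * (x * α ⟨0, hr⟩) ^ 2 + x * α ⟨0, hr⟩ / qInt q n := by
        rw [ht0x]; field_simp; ring
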